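/- Let T be a tree on n ≥ 5 vertices that is not a path. Then h(T) ≥ 3·log 3 + 2(n−4)·log 2, with equality if and only if T has exactly 3 leaves. In particular, the second smallest value of h among trees of order n is attained precisely by the trees with 3 leaves (all of which have degree sequence (3,2,…,2,1,1,1)). -/

import Mathlib

open Finset

/-- `f x = x * log x` (note `Real.log 0 = 0`, so `f 0 = 0`). -/
noncomputable def f (x : ℝ) : ℝ := x * Real.log x

section
noncomputable def phi (k : ℕ) : ℝ := f k - 2 * Real.log 2 * ((k:ℝ) - 1)

lemma phi_one : phi 1 = 0 := by simp [phi, f]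
lemma phi_two : phi 2 = 0 := by simp [phi, f]; ring
lemma phi_three_pos : 0 < phi 3 := by
  have h : Real.log 16 < Real.log 27 := by
    apply Real.log_lt_log <;> norm_num
  have h16 : Real.log 16 = 4 * Real.log 2 := by
    rw [show (16:ℝ) = 2^4 by norm_num, Real.log_pow]; ring
  have h27 : Real.log 27 = 3 * Real.log 3 := by
    rw [show (27:ℝ) = 3^3 by norm_num, Real.log_pow]; ring
  simp only [phi, f]
  push_cast
  nlinarith
lemma phi_gt_of_four_le {k : ℕ} (hk : 4 ≤ k) : phi 3 < phi k := by
  have h1 : Real.log 4 ≤ Real.log k := Real.log_le_log (by norm_num) (by exact_mod_cast hk)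
  have h4 : Real.log 4 = 2 * Real.log 2 := by
    rw [show (4:ℝ) = 2^2 by norm_num, Real.log_pow]; ring
  have hk4 : (4:ℝ) ≤ k := by exact_mod_cast hk
  have key : 2 * Real.log 2 ≤ phi k := by
    have : (k:ℝ) * Real.log 4 ≤ (k:ℝ) * Real.log k :=
      mul_le_mul_of_nonneg_left h1 (by positivity)
    simp only [phi, f]; nlinarith
  have h2 : phi 3 < 2 * Real.log 2 := by
    have h : Real.log 27 < Real.log 64 := by apply Real.log_lt_log <;> norm_num
    have h64 : Real.log 64 = 6 * Real.log 2 := by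
      rw [show (64:ℝ) = 2^6 by norm_num, Real.log_pow]; ring
    have h27 : Real.log 27 = 3 * Real.log 3 := by
      rw [show (27:ℝ) = 3^3 by norm_num, Real.log_pow]; ring
    simp only [phi, f]; push_cast; nlinarith
  linarith
lemma phi_nonneg {k : ℕ} (hk : 1 ≤ k) : 0 ≤ phi k := by
  rcases Nat.lt_or_ge k 4 with h | h
  · interval_cases k
    · exact phi_one.ge
    · exact phi_two.ge
    · exact phi_three_pos.le
  · exact le_of_lt (phi_three_pos.trans (phi_gt_of_four_le h))

lemma phi_ge_three {k : ℕ} (hk : 3 ≤ k) : phi 3 ≤ phi k := by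
  rcases Nat.lt_or_ge k 4 with h | h
  · have : k = 3 := by omega
    simp [this]
  · exact (phi_gt_of_four_le h).le

lemma phi_eq_zero_iff {k : ℕ} (hk : 1 ≤ k) : phi k = 0 ↔ k ≤ 2 := by
  constructor
  · intro h
    by_contra hc
    have h3 : 3 ≤ k := by omega
    have := phi_three_pos.trans_le (phi_ge_three h3)
    linarith
  · intro h
    interval_cases k
    · exact phi_one
    · exact phi_two

lemma phi_eq_three_iff {k : ℕ} (hk : 3 ≤ k) : phi k = phi 3 ↔ k = 3 := by
  constructor
  · intro h
    by_contra hc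
    have := phi_gt_of_four_le (show 4 ≤ k by omega)
    linarith
  · rintro rfl; rfl



open SimpleGraph
variable {V : Type*} {G : SimpleGraph V}

lemma getVert_injOn {a b : V} (p : G.Walk a b) (hp : p.IsPath) :
    ∀ i j, i ≤ p.length → j ≤ p.length → p.getVert i = p.getVert j → i = j := by
  induction p with
  | nil => intro i j hi hj _; simp at hi hj; omega
  | cons h q ih =>
    rw [Walk.cons_isPath_iff] at hp
    intro i j hi hj heq
    match i, j with
    | 0, 0 => rfl
    | 0, j+1 =>
      exfalso
      rw [Walk.getVert_zero, Walk.getVert_cons_succ] at heq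
      exact hp.2 (Walk.mem_support_iff_exists_getVert.2 ⟨j, heq.symm, by simpa using hj⟩)
    | i+1, 0 =>
      exfalso
      rw [Walk.getVert_zero, Walk.getVert_cons_succ] at heq
      exact hp.2 (Walk.mem_support_iff_exists_getVert.2 ⟨i, heq, by simpa using hi⟩)
    | i+1, j+1 =>
      rw [Walk.getVert_cons_succ, Walk.getVert_cons_succ] at heq
      have := ih hp.1 i j (by simpa using hi) (by simpa using hj) heq
      omega

lemma exists_subpath {a b : V} (p : G.Walk a b) (hp : p.IsPath) :
    ∀ i j, i ≤ j → j ≤ p.length →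
      ∃ q : G.Walk (p.getVert i) (p.getVert j),
        q.IsPath ∧ q.length = j - i ∧ ∀ x ∈ q.support, x ∈ p.support := by
  induction p with
  | nil =>
    intro i j hij hj
    simp only [Walk.length_nil, Nat.le_zero] at hj
    subst hj
    interval_cases i
    exact ⟨Walk.nil, by simp⟩
  | cons h q ih =>
    rw [Walk.cons_isPath_iff] at hp
    intro i j hij hj
    match i, j with
    | 0, 0 => exact ⟨Walk.nil, by simp⟩
    | 0, j+1 =>
      obtain ⟨r, hr1, hr2, hr3⟩ := ih hp.1 0 j (by omega) (by simpa using hj)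
      refine ⟨Walk.cons h (r.copy (q.getVert_zero) rfl), ?_, ?_, ?_⟩
      · show (Walk.cons h (r.copy q.getVert_zero rfl)).IsPath
        rw [Walk.cons_isPath_iff]
        refine ⟨by simpa using hr1, fun hc => hp.2 ?_⟩
        simp only [Walk.support_copy] at hc
        exact hr3 _ hc
      · show (Walk.cons h (r.copy q.getVert_zero rfl)).length = j + 1
        simp [hr2]
      · intro x hx
        change x ∈ (Walk.cons h (r.copy q.getVert_zero rfl)).support at hx
        simp only [Walk.support_cons, List.mem_cons, Walk.support_copy] at hx
        rcases hx with rfl | hx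
        · simp
        · simp only [Walk.support_cons, List.mem_cons]
          exact Or.inr (hr3 _ hx)
    | i+1, j+1 =>
      obtain ⟨r, hr1, hr2, hr3⟩ := ih hp.1 i j (by omega) (by simpa using hj)
      refine ⟨r.copy (by simp) (by simp), by simpa using hr1, by simpa using hr2, ?_⟩
      intro x hx
      replace hx : x ∈ r.support := by
        have e := Walk.support_copy r (show q.getVert i = (Walk.cons h q).getVert (i+1) by simp)
          (show q.getVert j = (Walk.cons h q).getVert (j+1) by simp)
        exact e ▸ hx
      simp only [Walk.support_cons, List.mem_cons]
      exact Or.inr (hr3 _ hx)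

lemma closure_lemma {V : Type*} [Fintype V] [DecidableEq V] {G : SimpleGraph V}
    [DecidableRel G.Adj] {a b : V} (p : G.Walk a b) (hp : p.IsPath)
    (hab : a ≠ b) (hda : G.degree a = 1) (hdb : G.degree b = 1)
    (hdeg : ∀ v, G.degree v ≤ 2) :
    ∀ u ∈ p.support, ∀ w, G.Adj u w → w ∈ p.support := by
  intro u hu w hw
  obtain ⟨i, hi, hile⟩ := Walk.mem_support_iff_exists_getVert.1 hu
  have hL : 1 ≤ p.length := by
    rcases Nat.eq_zero_or_pos p.length with h0 | h
    · exact absurd (Walk.eq_of_length_eq_zero h0) hab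
    · exact h
  subst hi
  rcases Nat.eq_zero_or_pos i with rfl | hipos
  · -- u = a
    have h1 : G.Adj a (p.getVert 1) := by
      simpa using p.adj_getVert_succ (i := 0) (by omega)
    have hset : G.neighborFinset a = {p.getVert 1} := by
      apply Finset.eq_singleton_iff_unique_mem.2
      refine ⟨by simpa using h1, fun x hx => ?_⟩
      have hcard := hda
      rw [← G.card_neighborFinset_eq_degree] at hcard
      exact Finset.card_le_one.1 hcard.le x hx _ (by simpa using h1)
    have : w ∈ G.neighborFinset (p.getVert 0) := by simpa using hw
    rw [Walk.getVert_zero, hset] at this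
    simp only [Finset.mem_singleton] at this
    subst this
    exact Walk.mem_support_iff_exists_getVert.2 ⟨1, rfl, by omega⟩
  rcases Nat.lt_or_ge i p.length with hilt | hige
  · -- interior vertex
    have hpred : G.Adj (p.getVert i) (p.getVert (i-1)) := by
      have := p.adj_getVert_succ (i := i-1) (by omega)
      rw [show i - 1 + 1 = i by omega] at this
      exact this.symm
    have hsucc : G.Adj (p.getVert i) (p.getVert (i+1)) := p.adj_getVert_succ hilt
    have hne : p.getVert (i-1) ≠ p.getVert (i+1) := fun hc => by
      have := getVert_injOn p hp (i-1) (i+1) (by omega) (by omega) hc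
      omega
    have hsub : ({p.getVert (i-1), p.getVert (i+1)} : Finset V) ⊆
        G.neighborFinset (p.getVert i) := by
      intro x hx
      simp only [Finset.mem_insert, Finset.mem_singleton] at hx
      rcases hx with rfl | rfl
      · simpa using hpred
      · simpa using hsucc
    have hcard2 : ({p.getVert (i-1), p.getVert (i+1)} : Finset V).card = 2 := by
      rw [Finset.card_insert_of_notMem (by simpa using hne), Finset.card_singleton]
    have heq : G.neighborFinset (p.getVert i) = {p.getVert (i-1), p.getVert (i+1)} := by
      apply (Finset.eq_of_subset_of_card_le hsub ?_).symm
      rw [hcard2, G.card_neighborFinset_eq_degree]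
      exact hdeg _
    have : w ∈ G.neighborFinset (p.getVert i) := by simpa using hw
    rw [heq] at this
    simp only [Finset.mem_insert, Finset.mem_singleton] at this
    rcases this with rfl | rfl
    · exact Walk.mem_support_iff_exists_getVert.2 ⟨i-1, rfl, by omega⟩
    · exact Walk.mem_support_iff_exists_getVert.2 ⟨i+1, rfl, by omega⟩
  · -- u = b
    have hib : i = p.length := le_antisymm hile hige
    subst hib
    rw [p.getVert_length] at hw
    have h1 : G.Adj b (p.getVert (p.length - 1)) := by
      have := p.adj_getVert_succ (i := p.length - 1) (by omega)
      rw [show p.length - 1 + 1 = p.length by omega, p.getVert_length] at this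
      exact this.symm
    have hset : G.neighborFinset b = {p.getVert (p.length - 1)} := by
      apply Finset.eq_singleton_iff_unique_mem.2
      refine ⟨by simpa using h1, fun x hx => ?_⟩
      have hcard := hdb
      rw [← G.card_neighborFinset_eq_degree] at hcard
      exact Finset.card_le_one.1 hcard.le x hx _ (by simpa using h1)
    have : w ∈ G.neighborFinset b := by simpa using hw
    rw [hset] at this
    simp only [Finset.mem_singleton] at this
    subst this
    exact Walk.mem_support_iff_exists_getVert.2 ⟨p.length - 1, rfl, by omega⟩

lemma support_univ {V : Type*} [Fintype V] [DecidableEq V] {G : SimpleGraph V}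
    [DecidableRel G.Adj] {a b : V} (p : G.Walk a b) (hconn : G.Connected)
    (hclose : ∀ u ∈ p.support, ∀ w, G.Adj u w → w ∈ p.support) :
    ∀ v, v ∈ p.support := by
  have key : ∀ (v : V) (q : G.Walk v a), v ∈ p.support := by
    intro v q
    induction q with
    | nil => exact p.start_mem_support
    | cons h q ih => exact hclose _ (ih p hclose) _ h.symm
  intro v
  exact key v (hconn.preconnected v a).some

lemma degree_pos_of_connected {V : Type*} [Fintype V] [DecidableEq V] {G : SimpleGraph V}
    [DecidableRel G.Adj] (hconn : G.Connected) (hcard : 2 ≤ Fintype.card V) (v : V) :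
    1 ≤ G.degree v := by
  obtain ⟨w, hw⟩ := Fintype.exists_ne_of_one_lt_card (by omega) v
  obtain ⟨q⟩ := hconn.preconnected v w
  have hnil : ¬ q.Nil := by
    intro h
    exact hw.symm (q.eq_of_length_eq_zero (SimpleGraph.Walk.nil_iff_length_eq.1 h))
  have hadj : G.Adj v (q.getVert 1) := q.adj_snd hnil
  exact (G.degree_pos_iff_exists_adj v).2 ⟨_, hadj⟩

lemma tree_count {V : Type*} [Fintype V] [DecidableEq V] {G : SimpleGraph V}
    [DecidableRel G.Adj] (htree : G.IsTree) (hc : 2 ≤ Fintype.card V) :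
    ∑ v ∈ Finset.univ.filter (fun v => 3 ≤ G.degree v), ((G.degree v : ℤ) - 2)
      = (Finset.univ.filter (fun v => G.degree v = 1)).card - 2 := by
  have hdeg1 : ∀ v, 1 ≤ G.degree v := degree_pos_of_connected htree.1 hc
  have hsum : ∑ v, G.degree v = 2 * G.edgeFinset.card :=
    SimpleGraph.sum_degrees_eq_twice_card_edges G
  have hedge : G.edgeFinset.card + 1 = Fintype.card V := htree.card_edgeFinset
  have htot : ∑ v, ((G.degree v : ℤ) - 2) = -2 := by
    rw [Finset.sum_sub_distrib, Finset.sum_const]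
    have : ∑ v, ((G.degree v : ℤ)) = 2 * G.edgeFinset.card := by exact_mod_cast hsum
    rw [this]
    simp only [Finset.card_univ, smul_eq_mul, mul_comm]
    push_cast [← hedge]
    ring
  have hsplit := Finset.sum_filter_add_sum_filter_not Finset.univ
    (fun v => 3 ≤ G.degree v) (fun v => ((G.degree v : ℤ) - 2))
  have hsmall : ∑ v ∈ Finset.univ.filter (fun v => ¬ 3 ≤ G.degree v), ((G.degree v : ℤ) - 2)
      = -(Finset.univ.filter (fun v => G.degree v = 1)).card := by
    have h1 : ∑ v ∈ Finset.univ.filter (fun v => ¬ 3 ≤ G.degree v), ((G.degree v : ℤ) - 2)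
        = ∑ v ∈ Finset.univ.filter (fun v => ¬ 3 ≤ G.degree v),
            (if G.degree v = 1 then (-1 : ℤ) else 0) := by
      apply Finset.sum_congr rfl
      intro v hv
      simp only [Finset.mem_filter] at hv
      have h2 := hdeg1 v
      rcases (by omega : G.degree v = 1 ∨ G.degree v = 2) with h | h <;> simp [h]
    rw [h1, ← Finset.sum_filter, Finset.filter_filter, Finset.sum_const]
    have : Finset.univ.filter (fun v => ¬ 3 ≤ G.degree v ∧ G.degree v = 1)
        = Finset.univ.filter (fun v => G.degree v = 1) := by
      ext v; simp only [Finset.mem_filter]; constructor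
      · rintro ⟨_, _, h⟩; exact ⟨Finset.mem_univ v, h⟩
      · rintro ⟨_, h⟩; exact ⟨Finset.mem_univ v, by omega, h⟩
    rw [this]; simp
  rw [hsmall, htot] at hsplit
  omega

lemma exists_degree_three {V : Type*} [Fintype V] [DecidableEq V]
    (T : SimpleGraph V) [DecidableRel T.Adj] (n : ℕ) (hn : 5 ≤ n)
    (hcard : Fintype.card V = n) (htree : T.IsTree)
    (hnotpath : ¬ Nonempty (T ≃g SimpleGraph.pathGraph n)) :
    ∃ v, 3 ≤ T.degree v := by
  by_contra hcon
  push_neg at hcon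
  have hdeg2 : ∀ v, T.degree v ≤ 2 := fun v => by have := hcon v; omega
  have hc2 : 2 ≤ Fintype.card V := by omega
  have hdeg1 : ∀ v, 1 ≤ T.degree v := degree_pos_of_connected htree.1 hc2
  -- leaf count is 2
  have hcount := tree_count htree hc2
  have hempty : Finset.univ.filter (fun v => 3 ≤ T.degree v) = ∅ := by
    apply Finset.filter_false_of_mem
    intro v _
    have := hdeg2 v; omega
  rw [hempty, Finset.sum_empty] at hcount
  have hL : (Finset.univ.filter (fun v => T.degree v = 1)).card = 2 := by omega
  obtain ⟨a, ha, b, hb, hab⟩ := Finset.one_lt_card.1 (by omega :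
    1 < (Finset.univ.filter (fun v => T.degree v = 1)).card)
  simp only [Finset.mem_filter] at ha hb
  obtain ⟨p, hp⟩ := (htree.existsUnique_path a b).exists
  have hclose := closure_lemma p hp hab ha.2 hb.2 hdeg2
  have huniv := support_univ p htree.1 hclose
  -- length of p is n - 1
  have hnodup := hp.support_nodup
  have hlen : p.length + 1 = n := by
    have h1 : p.support.toFinset = Finset.univ := by
      apply Finset.eq_univ_of_forall
      intro v; rw [List.mem_toFinset]; exact huniv v
    have h2 : p.support.toFinset.card = p.support.length := List.toFinset_card_of_nodup hnodup
    rw [h1] at h2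
    rw [Finset.card_univ, hcard] at h2
    rw [SimpleGraph.Walk.length_support] at h2
    omega
  -- build the isomorphism
  have hbij : Function.Bijective (fun i : Fin n => p.getVert i.val) := by
    rw [Fintype.bijective_iff_injective_and_card]
    constructor
    · intro i j hij
      have := getVert_injOn p hp i.val j.val (by omega) (by omega) hij
      exact Fin.ext this
    · simp [hcard]
  have hadj_iff : ∀ i j : Fin n, T.Adj (p.getVert i.val) (p.getVert j.val) ↔
      (SimpleGraph.pathGraph n).Adj i j := by
    intro i j
    constructor
    · intro hadj
      rcases lt_trichotomy i.val j.val with h | h | h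
      · obtain ⟨q, hq, hqlen, -⟩ := exists_subpath p hp i.val j.val h.le (by omega)
        have := htree.2.path_unique ⟨q, hq⟩ (SimpleGraph.Path.singleton hadj)
        have hlen1 : q.length = 1 := by
          have h' := congrArg (fun r => SimpleGraph.Walk.length r.val) this
          simpa [SimpleGraph.Path.singleton] using h'
        rw [SimpleGraph.pathGraph_adj]
        omega
      · exfalso
        have : (i : Fin n) = j := Fin.ext h
        subst this
        exact T.loopless.irrefl _ hadj
      · obtain ⟨q, hq, hqlen, -⟩ := exists_subpath p hp j.val i.val h.le (by omega)
        have := htree.2.path_unique ⟨q, hq⟩ (SimpleGraph.Path.singleton hadj.symm)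
        have hlen1 : q.length = 1 := by
          have h' := congrArg (fun r => SimpleGraph.Walk.length r.val) this
          simpa [SimpleGraph.Path.singleton] using h'
        rw [SimpleGraph.pathGraph_adj]
        omega
    · intro hadj
      rw [SimpleGraph.pathGraph_adj] at hadj
      rcases hadj with h | h
      · have hi : i.val < p.length := by omega
        have := p.adj_getVert_succ hi
        rwa [show i.val + 1 = j.val from h] at this
      · have hj : j.val < p.length := by omega
        have := p.adj_getVert_succ hj
        rw [show j.val + 1 = i.val from h] at this
        exact this.symm
  refine hnotpath ⟨?_⟩
  have key : ∀ v : V, p.getVert ((Equiv.ofBijective _ hbij).symm v).val = v :=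
    fun v => (Equiv.ofBijective _ hbij).apply_symm_apply v
  exact { toEquiv := (Equiv.ofBijective _ hbij).symm
          map_rel_iff' := by
            intro v w
            rw [← hadj_iff, key, key] }

end

/-- For a tree `T` on `n ≥ 5` vertices that is not a path,
`h(T) ≥ 3 log 3 + 2(n-4) log 2`, with equality iff `T` has exactly `3` leaves.
Thus the second smallest value of `h` among trees of order `n` is attained precisely by the
trees with `3` leaves. -/
theorem second_smallest_h_trees {V : Type*} [Fintype V] [DecidableEq V]
    (T : SimpleGraph V) [DecidableRel T.Adj] (n : ℕ) (hn : 5 ≤ n)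
    (hcard : Fintype.card V = n) (htree : T.IsTree)
    (hnotpath : ¬ Nonempty (T ≃g SimpleGraph.pathGraph n)) :
    3 * Real.log 3 + 2 * ((n : ℝ) - 4) * Real.log 2 ≤ ∑ v, f (T.degree v) ∧
    (∑ v, f (T.degree v) = 3 * Real.log 3 + 2 * ((n : ℝ) - 4) * Real.log 2 ↔
      (Finset.univ.filter fun v => T.degree v = 1).card = 3) := by
  have hc2 : 2 ≤ Fintype.card V := by omega
  have hdeg1 : ∀ v, 1 ≤ T.degree v := degree_pos_of_connected htree.1 hc2
  obtain ⟨v0, hv0⟩ := exists_degree_three T n hn hcard htree hnotpath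
  -- degree sum
  have hedge : T.edgeFinset.card + 1 = Fintype.card V := htree.card_edgeFinset
  have hsumN : ∑ v, T.degree v = 2 * T.edgeFinset.card :=
    SimpleGraph.sum_degrees_eq_twice_card_edges T
  have hsumR : ∑ v, (T.degree v : ℝ) = 2 * (n : ℝ) - 2 := by
    have h1 : ((∑ v, T.degree v : ℕ) : ℝ) = 2 * T.edgeFinset.card := by exact_mod_cast hsumN
    rw [Nat.cast_sum] at h1
    rw [h1]
    have h2 : (T.edgeFinset.card : ℝ) = (n : ℝ) - 1 := by
      have : ((T.edgeFinset.card + 1 : ℕ) : ℝ) = ((Fintype.card V : ℕ) : ℝ) := by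
        rw [hedge]
      push_cast [hcard] at this
      linarith
    rw [h2]; ring
  -- decomposition
  have hdecomp : ∑ v, f (T.degree v)
      = (∑ v, phi (T.degree v)) + 2 * Real.log 2 * ((n : ℝ) - 2) := by
    have h1 : ∀ v : V, f (T.degree v)
        = phi (T.degree v) + 2 * Real.log 2 * ((T.degree v : ℝ) - 1) := by
      intro v; simp only [phi]; ring
    rw [Finset.sum_congr rfl (fun v _ => h1 v), Finset.sum_add_distrib, ← Finset.mul_sum]
    congr 1
    rw [Finset.sum_sub_distrib, hsumR, Finset.sum_const, Finset.card_univ, hcard]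
    ring
  have htarget : 3 * Real.log 3 + 2 * ((n : ℝ) - 4) * Real.log 2
      = phi 3 + 2 * Real.log 2 * ((n : ℝ) - 2) := by
    simp only [phi, f]
    push_cast
    ring
  have hnn : ∀ v : V, 0 ≤ phi (T.degree v) := fun v => phi_nonneg (hdeg1 v)
  -- the key reduction
  have hkey : (phi 3 ≤ ∑ v, phi (T.degree v)) ∧
      ((∑ v, phi (T.degree v)) = phi 3 ↔
        (Finset.univ.filter fun v => T.degree v = 1).card = 3) := by
    have hv0le : phi (T.degree v0) ≤ ∑ v, phi (T.degree v) :=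
      Finset.single_le_sum (fun v _ => hnn v) (Finset.mem_univ v0)
    have h3le : phi 3 ≤ phi (T.degree v0) := phi_ge_three hv0
    have hcount := tree_count htree hc2
    constructor
    · linarith
    constructor
    · -- equality implies 3 leaves
      intro hEq
      have hsplit : ∑ v, phi (T.degree v)
          = phi (T.degree v0) + ∑ v ∈ Finset.univ.erase v0, phi (T.degree v) :=
        (Finset.add_sum_erase Finset.univ _ (Finset.mem_univ v0)).symm
      have herasenn : 0 ≤ ∑ v ∈ Finset.univ.erase v0, phi (T.degree v) :=
        Finset.sum_nonneg fun v _ => hnn v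
      have hv0eq : phi (T.degree v0) = phi 3 := by linarith
      have herase0 : ∑ v ∈ Finset.univ.erase v0, phi (T.degree v) = 0 := by linarith
      have hd3 : T.degree v0 = 3 := (phi_eq_three_iff hv0).1 hv0eq
      have hother : ∀ v, v ≠ v0 → T.degree v ≤ 2 := by
        intro v hv
        have := (Finset.sum_eq_zero_iff_of_nonneg (fun w _ => hnn w)).1 herase0 v
          (Finset.mem_erase.2 ⟨hv, Finset.mem_univ v⟩)
        exact (phi_eq_zero_iff (hdeg1 v)).1 this
      have hA3 : Finset.univ.filter (fun v => 3 ≤ T.degree v) = {v0} := by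
        ext v
        simp only [Finset.mem_filter, Finset.mem_univ, true_and, Finset.mem_singleton]
        constructor
        · intro h
          by_contra hne
          have := hother v hne
          omega
        · rintro rfl; exact hv0
      rw [hA3, Finset.sum_singleton, hd3] at hcount
      omega
    · -- 3 leaves implies equality
      intro hL
      rw [hL] at hcount
      have hone : ∑ v ∈ Finset.univ.filter (fun v => 3 ≤ T.degree v),
          ((T.degree v : ℤ) - 2) = 1 := by omega
      have hmemv0 : v0 ∈ Finset.univ.filter (fun v => 3 ≤ T.degree v) :=
        Finset.mem_filter.2 ⟨Finset.mem_univ v0, hv0⟩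
      have hcard1 : (Finset.univ.filter (fun v => 3 ≤ T.degree v)).card = 1 := by
        have hge : ∀ v ∈ Finset.univ.filter (fun v => 3 ≤ T.degree v),
            (1 : ℤ) ≤ (T.degree v : ℤ) - 2 := by
          intro v hv
          simp only [Finset.mem_filter] at hv
          have := hv.2
          omega
        have := Finset.card_nsmul_le_sum _ _ _ hge
        simp only [nsmul_eq_mul, mul_one] at this
        rw [hone] at this
        have hpos : 0 < (Finset.univ.filter (fun v => 3 ≤ T.degree v)).card :=
          Finset.card_pos.2 ⟨v0, hmemv0⟩
        omega
      obtain ⟨u, hu⟩ := Finset.card_eq_one.1 hcard1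
      rw [hu, Finset.sum_singleton] at hone
      have hdu : T.degree u = 3 := by omega
      have hsplit := Finset.sum_filter_add_sum_filter_not Finset.univ
        (fun v => 3 ≤ T.degree v) (fun v => phi (T.degree v))
      have hbig : ∑ v ∈ Finset.univ.filter (fun v => 3 ≤ T.degree v),
          phi (T.degree v) = phi 3 := by
        rw [hu, Finset.sum_singleton, hdu]
      have hsmall : ∑ v ∈ Finset.univ.filter (fun v => ¬ 3 ≤ T.degree v),
          phi (T.degree v) = 0 := by
        apply Finset.sum_eq_zero
        intro v hv
        simp only [Finset.mem_filter] at hv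
        have h1 := hdeg1 v
        exact (phi_eq_zero_iff h1).2 (by omega)
      rw [hbig, hsmall] at hsplit
      linarith
  rw [hdecomp, htarget]
  refine ⟨by linarith [hkey.1], ?_⟩
  rw [← hkey.2]
  constructor <;> intro h <;> linarith
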